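/- For every integer n ≥ 4, the semigroup OCP_n is not right abundant: there exists α ∈ OCP_n such that no idempotent ε ∈ OCP_n (i.e., εε = ε) satisfies α R* ε. -/

import Mathlib

/-- A partial transformation of the chain `[n] = {1,…,n}`, encoded as a map
`ℕ → Option ℕ`: `α x = some y` means `x ∈ dom α` and `xα = y`. -/
def IsPT (n : ℕ) (α : ℕ → Option ℕ) : Prop :=
  ∀ x y, α x = some y → x ∈ Set.Icc 1 n ∧ y ∈ Set.Icc 1 n

/-- Composition of partial transformations: apply `α` first, then `β`. -/
def pcomp (α β : ℕ → Option ℕ) : ℕ → Option ℕ := fun x => (α x).bind β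

/-- `α` is a contraction: `|xα − yα| ≤ |x − y|` on its domain. -/
def IsContraction (α : ℕ → Option ℕ) : Prop :=
  ∀ x y a b, α x = some a → α y = some b → Nat.dist a b ≤ Nat.dist x y

def IsOrderPreserving (α : ℕ → Option ℕ) : Prop :=
  ∀ x y a b, α x = some a → α y = some b → x ≤ y → a ≤ b

def IsOrderReversing (α : ℕ → Option ℕ) : Prop :=
  ∀ x y a b, α x = some a → α y = some b → x ≤ y → b ≤ a

/-- `CP n`: the partial contractions of `[n]`. -/
def CP (n : ℕ) (α : ℕ → Option ℕ) : Prop := IsPT n α ∧ IsContraction α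

/-- `OCP n`: the order preserving partial contractions of `[n]`. -/
def OCP (n : ℕ) (α : ℕ → Option ℕ) : Prop := CP n α ∧ IsOrderPreserving α

/-- `ORCP n`: the order preserving or order reversing partial contractions of `[n]`. -/
def ORCP (n : ℕ) (α : ℕ → Option ℕ) : Prop :=
  CP n α ∧ (IsOrderPreserving α ∨ IsOrderReversing α)

/-- The image of a partial transformation. -/
def img (α : ℕ → Option ℕ) : Set ℕ := {y | ∃ x, α x = some y}

/-- The kernel of a partial transformation:
`{(x,y) ∈ dom α × dom α : xα = yα}`. -/
def pker (α : ℕ → Option ℕ) : Set (ℕ × ℕ) :=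
  {p | α p.1 ≠ none ∧ α p.1 = α p.2}

/-- The starred Green's relation `L*` relative to the class `S`:
`α L* β` iff for all `γ, δ ∈ S`, `αγ = αδ ⟺ βγ = βδ`. -/
def LStar (S : (ℕ → Option ℕ) → Prop) (α β : ℕ → Option ℕ) : Prop :=
  ∀ γ δ, S γ → S δ → (pcomp α γ = pcomp α δ ↔ pcomp β γ = pcomp β δ)

/-- The starred Green's relation `R*` relative to the class `S`:
`α R* β` iff for all `γ, δ ∈ S`, `γα = δα ⟺ γβ = δβ`. -/
def RStar (S : (ℕ → Option ℕ) → Prop) (α β : ℕ → Option ℕ) : Prop :=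
  ∀ γ δ, S γ → S δ → (pcomp γ α = pcomp δ α ↔ pcomp γ β = pcomp δ β)

/-- The witness map: `1↦1, 2↦2, 3↦2, 4↦3`, undefined elsewhere. -/
def myα (x : ℕ) : Option ℕ :=
  if x = 1 then some 1 else if x = 2 then some 2 else
  if x = 3 then some 2 else if x = 4 then some 3 else none

/-- Singleton map `1 ↦ x`. -/
def sing (x : ℕ) : ℕ → Option ℕ := fun t => if t = 1 then some x else none

lemma sing_OCP {n x : ℕ} (h1 : 1 ≤ x) (h2 : x ≤ n) : OCP n (sing x) := by
  refine ⟨⟨?_, ?_⟩, ?_⟩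
  · intro t y h
    unfold sing at h
    split_ifs at h with ht
    injection h with h'
    subst h'
    exact ⟨⟨by omega, by omega⟩, h1, h2⟩
  · intro u v a b hu hv
    unfold sing at hu hv
    by_cases hu1 : u = 1
    · rw [if_pos hu1] at hu
      by_cases hv1 : v = 1
      · rw [if_pos hv1] at hv
        injection hu with hu'; injection hv with hv'
        subst hu'; subst hv'
        simp [Nat.dist]
      · rw [if_neg hv1] at hv; cases hv
    · rw [if_neg hu1] at hu; cases hu
  · intro u v a b hu hv _
    unfold sing at hu hv
    by_cases hu1 : u = 1
    · rw [if_pos hu1] at hu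
      by_cases hv1 : v = 1
      · rw [if_pos hv1] at hv
        injection hu with hu'; injection hv with hv'
        omega
      · rw [if_neg hv1] at hv; cases hv
    · rw [if_neg hu1] at hu; cases hu

lemma zero_OCP {n : ℕ} : OCP n (fun _ => none) := by
  refine ⟨⟨?_, ?_⟩, ?_⟩
  · intro x y h; cases h
  · intro x y a b hx _; cases hx
  · intro x y a b hx _ _; cases hx

lemma sing_zero_eq (β : ℕ → Option ℕ) (x : ℕ) :
    pcomp (sing x) β = pcomp (fun _ => none) β ↔ β x = none := by
  constructor
  · intro h
    have := congrFun h 1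
    simpa [pcomp, sing] using this
  · intro h
    funext t
    by_cases ht : t = 1 <;> simp [pcomp, sing, ht, h]

lemma sing_pair_eq (β : ℕ → Option ℕ) (x y : ℕ) :
    pcomp (sing x) β = pcomp (sing y) β ↔ β x = β y := by
  constructor
  · intro h
    have := congrFun h 1
    simpa [pcomp, sing] using this
  · intro h
    funext t
    by_cases ht : t = 1 <;> simp [pcomp, sing, ht, h]

/-- For `n ≥ 4`, `OCP n` is not right abundant: some `R*`-class has no idempotent. -/
theorem OCP_not_right_abundant (n : ℕ) (hn : 4 ≤ n) :
    ∃ α : ℕ → Option ℕ, OCP n α ∧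
      ∀ ε : ℕ → Option ℕ, OCP n ε → pcomp ε ε = ε → ¬ RStar (OCP n) α ε := by
  refine ⟨myα, ?_, ?_⟩
  · refine ⟨⟨?_, ?_⟩, ?_⟩
    · intro x y h
      unfold myα at h
      split_ifs at h <;> cases h <;> exact ⟨⟨by omega, by omega⟩, ⟨by omega, by omega⟩⟩
    · intro x y a b hx hy
      unfold myα at hx hy
      split_ifs at hx hy <;> cases hx <;> cases hy <;> simp_all [Nat.dist] <;> omega
    · intro x y a b hx hy hxy
      unfold myα at hx hy
      split_ifs at hx hy <;> cases hx <;> cases hy <;> omega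
  · intro ε hε hid hR
    -- key facts from R*
    have key : ∀ x y : ℕ, 1 ≤ x → x ≤ n → 1 ≤ y → y ≤ n →
        (myα x = myα y ↔ ε x = ε y) := by
      intro x y hx1 hxn hy1 hyn
      have := hR (sing x) (sing y) (sing_OCP hx1 hxn) (sing_OCP hy1 hyn)
      rw [sing_pair_eq, sing_pair_eq] at this
      exact this
    have keyd : ∀ x : ℕ, 1 ≤ x → x ≤ n → (myα x = none ↔ ε x = none) := by
      intro x hx1 hxn
      have := hR (sing x) (fun _ => none) (sing_OCP hx1 hxn) zero_OCP
      rw [sing_zero_eq, sing_zero_eq] at this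
      exact this
    -- idempotent fixes images
    have hfix : ∀ x a : ℕ, ε x = some a → ε a = some a := by
      intro x a h
      have := congrFun hid x
      rw [show pcomp ε ε x = (ε x).bind ε from rfl, h] at this
      simpa using this
    -- ε p = some p forced when p's kernel class is a singleton
    have hval : ∀ p : ℕ, 1 ≤ p → p ≤ n → myα p ≠ none → ∃ a, ε p = some a ∧
        1 ≤ a ∧ a ≤ n ∧ myα a = myα p := by
      intro p hp1 hpn hdom
      have hne : ε p ≠ none := fun h => hdom ((keyd p hp1 hpn).mpr h)
      obtain ⟨a, ha⟩ := Option.ne_none_iff_exists'.mp hne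
      have haIcc := (hε.1.1 p a ha).2
      have haa := hfix p a ha
      have : ε p = ε a := by rw [ha, haa]
      have := (key p a hp1 hpn haIcc.1 haIcc.2).mpr this
      exact ⟨a, ha, haIcc.1, haIcc.2, this.symm⟩
    obtain ⟨a, ha, ha1, han, haval⟩ := hval 1 (by omega) (by omega) (by simp [myα])
    obtain ⟨b, hb, hb1, hbn, hbval⟩ := hval 2 (by omega) (by omega) (by simp [myα])
    obtain ⟨c, hc, hc1, hcn, hcval⟩ := hval 4 (by omega) (by omega) (by simp [myα])
    -- identify a, c and constrain b
    have ha' : a = 1 := by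
      clear hR key keyd hval hid
      unfold myα at haval
      split_ifs at haval <;>
        first
          | omega
          | (exfalso; exact absurd haval (by decide))
          | exact Option.noConfusion haval
    have hc' : c = 4 := by
      clear hR key keyd hval hid
      unfold myα at hcval
      split_ifs at hcval <;>
        first
          | omega
          | (exfalso; exact absurd hcval (by decide))
          | exact Option.noConfusion hcval
    have hb' : b = 2 ∨ b = 3 := by
      clear hR key keyd hval hid
      unfold myα at hbval
      split_ifs at hbval <;>
        first
          | omega
          | (exfalso; exact absurd hbval (by decide))
          | exact Option.noConfusion hbval
    subst ha' hc'
    -- ε 3 = ε 2 = some b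
    have h32 : ε 3 = some b := by
      have : myα 3 = myα 2 := by simp [myα]
      have := (key 3 2 (by omega) (by omega) (by omega) (by omega)).mp this
      rw [this, hb]
    -- contraction violation
    have hcon := hε.1.2
    rcases hb' with hb2 | hb3
    · subst hb2
      exact absurd (hcon 3 4 2 4 h32 hc) (by decide)
    · subst hb3
      exact absurd (hcon 1 2 1 3 ha hb) (by decide)
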